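/- arXiv:1408.5993 — 2 statements merged into one kernel-verified Lean document; each statement's English description precedes it below -/
import Mathlib

section
/- The two-variable interpolation Jack polynomial P^ip_{(m_1,m_2)}(x_1,x_2;τ) = (-1)^{m_1+m_2} (-x_1)_{m_2} (-x_2)_{m_1} ₃F₂(-m_1+m_2, τ, -m_1+1-τ+x_1; 1-m_1+m_2-τ, -m_1+1+x_2; 1) arises as the q ↑ 1 limit: lim_{q↑1} (q-1)^{-(m_1+m_2)} P^ip_{(m_1,m_2)}(q^{x_1}, q^{x_2}; q, q^τ) where P^ip_{(m_1,m_2)}(x_1,x_2;q,t) := x_1^{m_2} x_2^{m_1} (x_1^{-1};q)_{m_2} (x_2^{-1};q)_{m_1} ₃φ₂(q^{-m_1+m_2}, t, q^{-m_1+1}t^{-1}x_1; q^{1-m_1+m_2}t^{-1}, q^{-m_1+1}x_2; q, q). -/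
open Filter Set Finset Real

/-- The `q`-shifted factorial `(a;q)_k`. -/
def qPoch (q a : ℝ) (k : ℕ) : ℝ := ∏ i ∈ Finset.range k, (1 - a * q ^ i)

/-- The Pochhammer symbol `(a)_k`. -/
def poch (a : ℝ) (k : ℕ) : ℝ := ∏ i ∈ Finset.range k, (a + i)

private lemma limR (a : ℝ) :
    Tendsto (fun q : ℝ => (q ^ a - 1) / (q - 1)) (nhdsWithin 1 (Ioo (0:ℝ) 1)) (nhds a) := by
  have h : HasDerivAt (fun q : ℝ => q ^ a) (a * (1:ℝ) ^ (a - 1)) 1 :=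
    Real.hasDerivAt_rpow_const (Or.inl one_ne_zero)
  rw [Real.one_rpow, mul_one] at h
  have h2 := hasDerivAt_iff_tendsto_slope.mp h
  have h3 : Tendsto (slope (fun q : ℝ => q ^ a) 1) (nhdsWithin 1 (Ioo (0:ℝ) 1)) (nhds a) :=
    h2.mono_left (nhdsWithin_mono _ fun q hq => ne_of_lt hq.2)
  refine h3.congr fun q => ?_
  rw [slope_def_field]
  simp [Real.one_rpow]

private lemma limProd (a : ℝ) (k : ℕ) :
    Tendsto (fun q : ℝ => ∏ i ∈ Finset.range k, (q ^ (a + i) - 1) / (q - 1))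
      (nhdsWithin 1 (Ioo (0:ℝ) 1)) (nhds (poch a k)) := by
  unfold poch
  exact tendsto_finset_prod _ fun i _ => limR (a + i)

private lemma limS (x : ℝ) (i : ℕ) :
    Tendsto (fun q : ℝ => (q ^ x - q ^ i) / (q - 1)) (nhdsWithin 1 (Ioo (0:ℝ) 1))
      (nhds (x - i)) := by
  refine ((limR x).sub (limR i)).congr fun q => ?_
  rw [← sub_div, Real.rpow_natCast]
  ring_nf

private lemma pref_eq {q : ℝ} (hq0 : 0 < q) (hne : q - 1 ≠ 0) (x : ℝ) (m : ℕ) :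
    (q ^ x) ^ m * qPoch q ((q ^ x)⁻¹) m
      = (q - 1) ^ m * ∏ i ∈ Finset.range m, (q ^ x - q ^ i) / (q - 1) := by
  have hx : (q:ℝ) ^ x ≠ 0 := (Real.rpow_pos_of_pos hq0 x).ne'
  unfold qPoch
  have h1 : (q ^ x) ^ m * ∏ i ∈ Finset.range m, (1 - (q ^ x)⁻¹ * q ^ i)
      = ∏ i ∈ Finset.range m, (q ^ x - q ^ i) := by
    rw [show (q ^ x) ^ m = ∏ _i ∈ Finset.range m, q ^ x by
          rw [Finset.prod_const, Finset.card_range],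
        ← Finset.prod_mul_distrib]
    refine Finset.prod_congr rfl fun i _ => ?_
    field_simp
  have h2 : (q - 1) ^ m * ∏ i ∈ Finset.range m, (q ^ x - q ^ i) / (q - 1)
      = ∏ i ∈ Finset.range m, (q ^ x - q ^ i) := by
    rw [show (q - 1) ^ m = ∏ _i ∈ Finset.range m, (q - 1) by
          rw [Finset.prod_const, Finset.card_range],
        ← Finset.prod_mul_distrib]
    refine Finset.prod_congr rfl fun i _ => ?_
    field_simp
  rw [h1, h2]

private lemma qPoch_rpow {q : ℝ} (hq0 : 0 < q) (hne : q - 1 ≠ 0) (a : ℝ) (k : ℕ) :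
    qPoch q (q ^ a) k
      = (-(q - 1)) ^ k * ∏ i ∈ Finset.range k, (q ^ (a + i) - 1) / (q - 1) := by
  unfold qPoch
  rw [show (-(q - 1)) ^ k = ∏ _i ∈ Finset.range k, (-(q - 1)) by
        rw [Finset.prod_const, Finset.card_range],
      ← Finset.prod_mul_distrib]
  refine Finset.prod_congr rfl fun i _ => ?_
  rw [← Real.rpow_natCast q i, ← Real.rpow_add hq0]
  field_simp
  ring

private lemma qPoch_q {q : ℝ} (hq0 : 0 < q) (hne : q - 1 ≠ 0) (k : ℕ) :
    qPoch q q k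
      = (-(q - 1)) ^ k * ∏ i ∈ Finset.range k, (q ^ ((1:ℝ) + i) - 1) / (q - 1) := by
  have := qPoch_rpow hq0 hne 1 k
  rwa [Real.rpow_one] at this

private lemma cancel_aux {c N₁ N₂ N₃ D₁ D₂ D₃ : ℝ} (hc : c ≠ 0) :
    c * N₁ * (c * N₂) * (c * N₃) / (c * D₁ * (c * D₂) * (c * D₃))
      = N₁ * N₂ * N₃ / (D₁ * D₂ * D₃) := by
  rw [show c * N₁ * (c * N₂) * (c * N₃) = c * c * c * (N₁ * N₂ * N₃) by ring,
      show c * D₁ * (c * D₂) * (c * D₃) = c * c * c * (D₁ * D₂ * D₃) by ring,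
      mul_div_mul_left _ _ (by simp [hc] : c * c * c ≠ 0)]

private lemma poch_neg (x : ℝ) (m : ℕ) :
    (-1:ℝ) ^ m * poch (-x) m = ∏ i ∈ Finset.range m, (x - i) := by
  unfold poch
  rw [show (-1:ℝ) ^ m = ∏ _i ∈ Finset.range m, (-1:ℝ) by
        rw [Finset.prod_const, Finset.card_range],
      ← Finset.prod_mul_distrib]
  exact Finset.prod_congr rfl fun i _ => by ring

/-- The two-variable interpolation Jack polynomial
`P^ip_{(m₁,m₂)}(x₁,x₂;τ) = (-1)^{m₁+m₂}(-x₁)_{m₂}(-x₂)_{m₁}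
  ₃F₂(-m₁+m₂, τ, -m₁+1-τ+x₁; 1-m₁+m₂-τ, -m₁+1+x₂; 1)`
is the `q ↑ 1` limit of `(q-1)^{-(m₁+m₂)} P^ip_{(m₁,m₂)}(q^{x₁},q^{x₂};q,q^τ)`, where
`P^ip_{(m₁,m₂)}(y₁,y₂;q,t) = y₁^{m₂} y₂^{m₁} (y₁⁻¹;q)_{m₂}(y₂⁻¹;q)_{m₁}
  ₃φ₂(q^{-m₁+m₂}, t, q^{-m₁+1}t⁻¹y₁; q^{1-m₁+m₂}t⁻¹, q^{-m₁+1}y₂; q, q)`. -/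
theorem interpolation_jack_two_var_as_limit (τ x₁ x₂ : ℝ) (hτ : 0 < τ)
    (m₁ m₂ : ℕ) (h : m₂ ≤ m₁)
    (hx₂ : ∀ i : ℕ, i < m₁ - m₂ → (1 : ℝ) - m₁ + x₂ + i ≠ 0) :
    Filter.Tendsto
      (fun q : ℝ =>
        ((q - 1) ^ (m₁ + m₂))⁻¹ *
          ((q ^ x₁) ^ m₂ * (q ^ x₂) ^ m₁ *
            qPoch q ((q ^ x₁)⁻¹) m₂ * qPoch q ((q ^ x₂)⁻¹) m₁ *
            ∑ k ∈ Finset.range (m₁ - m₂ + 1),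
              qPoch q (q ^ (-(m₁ : ℝ) + m₂)) k * qPoch q (q ^ τ) k *
                  qPoch q (q ^ (-(m₁ : ℝ) + 1) * (q ^ τ)⁻¹ * q ^ x₁) k /
                (qPoch q (q ^ ((1 : ℝ) - m₁ + m₂) * (q ^ τ)⁻¹) k *
                  qPoch q (q ^ (-(m₁ : ℝ) + 1) * q ^ x₂) k * qPoch q q k) *
                q ^ k))
      (nhdsWithin 1 (Set.Ioo (0 : ℝ) 1))
      (nhds ((-1 : ℝ) ^ (m₁ + m₂) * poch (-x₁) m₂ * poch (-x₂) m₁ *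
        ∑ k ∈ Finset.range (m₁ - m₂ + 1),
          poch (-(m₁ : ℝ) + m₂) k * poch τ k * poch (-(m₁ : ℝ) + 1 - τ + x₁) k /
            (poch (1 - (m₁ : ℝ) + m₂ - τ) k * poch (-(m₁ : ℝ) + 1 + x₂) k * poch 1 k))) := by
  set l := nhdsWithin (1:ℝ) (Ioo 0 1) with hl
  set F : ℝ → ℕ → ℝ := fun q k =>
    (∏ i ∈ Finset.range k, (q ^ (-(m₁ : ℝ) + m₂ + i) - 1) / (q - 1)) *
      (∏ i ∈ Finset.range k, (q ^ (τ + i) - 1) / (q - 1)) *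
      (∏ i ∈ Finset.range k, (q ^ (-(m₁ : ℝ) + 1 - τ + x₁ + i) - 1) / (q - 1)) /
      ((∏ i ∈ Finset.range k, (q ^ (1 - (m₁ : ℝ) + m₂ - τ + i) - 1) / (q - 1)) *
        (∏ i ∈ Finset.range k, (q ^ (-(m₁ : ℝ) + 1 + x₂ + i) - 1) / (q - 1)) *
        (∏ i ∈ Finset.range k, (q ^ ((1:ℝ) + i) - 1) / (q - 1))) *
      q ^ k with hF
  -- denominator limits are nonzero
  have hden : ∀ k ∈ Finset.range (m₁ - m₂ + 1),
      poch (1 - (m₁ : ℝ) + m₂ - τ) k * poch (-(m₁ : ℝ) + 1 + x₂) k * poch 1 k ≠ 0 := by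
    intro k hk
    rw [Finset.mem_range] at hk
    have hk' : k ≤ m₁ - m₂ := Nat.lt_succ_iff.mp hk
    have hcast : ((m₁ - m₂ : ℕ) : ℝ) = (m₁ : ℝ) - m₂ := by
      rw [Nat.cast_sub h]
    refine mul_ne_zero (mul_ne_zero ?_ ?_) ?_
    · unfold poch
      rw [Finset.prod_ne_zero_iff]
      intro i hi
      rw [Finset.mem_range] at hi
      have hi' : i < m₁ - m₂ := lt_of_lt_of_le hi hk'
      have h1 : (i : ℝ) + 1 ≤ ((m₁ - m₂ : ℕ) : ℝ) := by exact_mod_cast hi'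
      rw [hcast] at h1
      have : 1 - (m₁ : ℝ) + m₂ - τ + i < 0 := by linarith
      exact ne_of_lt this
    · unfold poch
      rw [Finset.prod_ne_zero_iff]
      intro i hi
      rw [Finset.mem_range] at hi
      have hi' : i < m₁ - m₂ := lt_of_lt_of_le hi hk'
      intro h0
      exact hx₂ i hi' (by linarith)
    · unfold poch
      rw [Finset.prod_ne_zero_iff]
      intro i _
      positivity
  have hqpow : ∀ k : ℕ, Tendsto (fun q : ℝ => q ^ k) l (nhds 1) := by
    intro k
    have h1 := (continuous_pow k).tendsto (1:ℝ)
    rw [one_pow] at h1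
    exact h1.mono_left nhdsWithin_le_nhds
  have hmain : Tendsto
      (fun q : ℝ =>
        (∏ i ∈ Finset.range m₂, (q ^ x₁ - q ^ i) / (q - 1)) *
          (∏ i ∈ Finset.range m₁, (q ^ x₂ - q ^ i) / (q - 1)) *
          ∑ k ∈ Finset.range (m₁ - m₂ + 1), F q k) l
      (nhds ((∏ i ∈ Finset.range m₂, (x₁ - i)) * (∏ i ∈ Finset.range m₁, (x₂ - i)) *
        ∑ k ∈ Finset.range (m₁ - m₂ + 1),
          poch (-(m₁ : ℝ) + m₂) k * poch τ k * poch (-(m₁ : ℝ) + 1 - τ + x₁) k /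
            (poch (1 - (m₁ : ℝ) + m₂ - τ) k * poch (-(m₁ : ℝ) + 1 + x₂) k * poch 1 k))) := by
    refine Tendsto.mul (Tendsto.mul ?_ ?_) ?_
    · exact tendsto_finset_prod _ fun i _ => limS x₁ i
    · exact tendsto_finset_prod _ fun i _ => limS x₂ i
    · refine tendsto_finset_sum _ fun k hk => ?_
      have ht := ((((limProd (-(m₁ : ℝ) + m₂) k).mul (limProd τ k)).mul
        (limProd (-(m₁ : ℝ) + 1 - τ + x₁) k)).div
        (((limProd (1 - (m₁ : ℝ) + m₂ - τ) k).mul (limProd (-(m₁ : ℝ) + 1 + x₂) k)).mul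
          (limProd 1 k)) (hden k hk)).mul (hqpow k)
      rw [mul_one] at ht
      exact ht
  -- eventual equality with the original function
  have hev : ∀ᶠ q in l, ((q - 1) ^ (m₁ + m₂))⁻¹ *
          ((q ^ x₁) ^ m₂ * (q ^ x₂) ^ m₁ *
            qPoch q ((q ^ x₁)⁻¹) m₂ * qPoch q ((q ^ x₂)⁻¹) m₁ *
            ∑ k ∈ Finset.range (m₁ - m₂ + 1),
              qPoch q (q ^ (-(m₁ : ℝ) + m₂)) k * qPoch q (q ^ τ) k *
                  qPoch q (q ^ (-(m₁ : ℝ) + 1) * (q ^ τ)⁻¹ * q ^ x₁) k /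
                (qPoch q (q ^ ((1 : ℝ) - m₁ + m₂) * (q ^ τ)⁻¹) k *
                  qPoch q (q ^ (-(m₁ : ℝ) + 1) * q ^ x₂) k * qPoch q q k) *
                q ^ k)
      = (∏ i ∈ Finset.range m₂, (q ^ x₁ - q ^ i) / (q - 1)) *
          (∏ i ∈ Finset.range m₁, (q ^ x₂ - q ^ i) / (q - 1)) *
          ∑ k ∈ Finset.range (m₁ - m₂ + 1), F q k := by
    filter_upwards [self_mem_nhdsWithin] with q hq
    obtain ⟨hq0, hq1⟩ := hq
    have hne : q - 1 ≠ 0 := sub_ne_zero.mpr (ne_of_lt hq1)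
    have hc : (-(q - 1)) ≠ 0 := neg_ne_zero.mpr hne
    have e₁ : q ^ (-(m₁ : ℝ) + 1) * (q ^ τ)⁻¹ * q ^ x₁ = q ^ (-(m₁ : ℝ) + 1 - τ + x₁) := by
      rw [← Real.rpow_neg hq0.le, ← Real.rpow_add hq0, ← Real.rpow_add hq0]
      congr 1 <;> ring
    have e₂ : q ^ ((1 : ℝ) - m₁ + m₂) * (q ^ τ)⁻¹ = q ^ (1 - (m₁ : ℝ) + m₂ - τ) := by
      rw [← Real.rpow_neg hq0.le, ← Real.rpow_add hq0]
      congr 1 <;> ring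
    have e₃ : q ^ (-(m₁ : ℝ) + 1) * q ^ x₂ = q ^ (-(m₁ : ℝ) + 1 + x₂) := by
      rw [← Real.rpow_add hq0]
    have hterm : ∀ k ∈ Finset.range (m₁ - m₂ + 1),
        qPoch q (q ^ (-(m₁ : ℝ) + m₂)) k * qPoch q (q ^ τ) k *
            qPoch q (q ^ (-(m₁ : ℝ) + 1) * (q ^ τ)⁻¹ * q ^ x₁) k /
          (qPoch q (q ^ ((1 : ℝ) - m₁ + m₂) * (q ^ τ)⁻¹) k *
            qPoch q (q ^ (-(m₁ : ℝ) + 1) * q ^ x₂) k * qPoch q q k) *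
          q ^ k = F q k := by
      intro k _
      rw [e₁, e₂, e₃, qPoch_rpow hq0 hne (-(m₁ : ℝ) + m₂) k, qPoch_rpow hq0 hne τ k,
        qPoch_rpow hq0 hne (-(m₁ : ℝ) + 1 - τ + x₁) k,
        qPoch_rpow hq0 hne (1 - (m₁ : ℝ) + m₂ - τ) k,
        qPoch_rpow hq0 hne (-(m₁ : ℝ) + 1 + x₂) k, qPoch_q hq0 hne k, hF,
        cancel_aux (pow_ne_zero k hc)]
    rw [Finset.sum_congr rfl hterm]
    rw [show (q ^ x₁) ^ m₂ * (q ^ x₂) ^ m₁ * qPoch q ((q ^ x₁)⁻¹) m₂ * qPoch q ((q ^ x₂)⁻¹) m₁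
        = ((q ^ x₁) ^ m₂ * qPoch q ((q ^ x₁)⁻¹) m₂) * ((q ^ x₂) ^ m₁ * qPoch q ((q ^ x₂)⁻¹) m₁)
        by ring,
      pref_eq hq0 hne x₁ m₂, pref_eq hq0 hne x₂ m₁, pow_add]
    have hp : (q - 1) ^ m₁ * (q - 1) ^ m₂ ≠ 0 :=
      mul_ne_zero (pow_ne_zero _ hne) (pow_ne_zero _ hne)
    rw [inv_mul_eq_div, div_eq_iff hp]
    ring
  have hval : (∏ i ∈ Finset.range m₂, (x₁ - (i:ℝ))) * (∏ i ∈ Finset.range m₁, (x₂ - (i:ℝ)))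
      = (-1:ℝ) ^ (m₁ + m₂) * poch (-x₁) m₂ * poch (-x₂) m₁ := by
    rw [← poch_neg x₁ m₂, ← poch_neg x₂ m₁, Nat.add_comm m₁ m₂, pow_add]
    ring
  rw [← hval]
  exact hmain.congr' (EventuallyEq.symm hev)
end

section
/- For partitions λ of length ≤ 2 with λ = (m_1, m_2), the reduction formula for BC_2-type interpolation Jack polynomials holds: P^ip_{(m_1,m_2)}(x_1,x_2; τ, α) = (α+x_1)_{m_2}(α-x_1)_{m_2}(α+x_2)_{m_2}(α-x_2)_{m_2} · P^ip_{(m_1-m_2,0)}(x_1,x_2; τ, m_2+α), when both sides are defined via their explicit tableau-sum/hypergeometric formulas. -/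
/-- The explicit `BC₂`-type interpolation Jack polynomial
`P^ip_{(m₁,m₂)}(x₁,x₂;τ,α) = (-1)^{m₁+m₂}(α+x₁,α-x₁,α+x₂,α-x₂)_{m₂}
  (m₂+τ+α+x₁, m₂+τ+α-x₁)_{m₁-m₂}
  ₄F₃(-m₁+m₂, τ, m₂+α+x₂, m₂+α-x₂; 1-m₁+m₂-τ, m₂+τ+α+x₁, m₂+τ+α-x₁; 1)`. -/
noncomputable def PBCipJack (τ α x₁ x₂ : ℝ) (m₁ m₂ : ℕ) : ℝ :=
  (-1 : ℝ) ^ (m₁ + m₂) *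
    (poch (α + x₁) m₂ * poch (α - x₁) m₂ * poch (α + x₂) m₂ * poch (α - x₂) m₂) *
    (poch ((m₂ : ℝ) + τ + α + x₁) (m₁ - m₂) * poch ((m₂ : ℝ) + τ + α - x₁) (m₁ - m₂)) *
    ∑ k ∈ Finset.range (m₁ - m₂ + 1),
      poch (-(m₁ : ℝ) + m₂) k * poch τ k * poch ((m₂ : ℝ) + α + x₂) k *
          poch ((m₂ : ℝ) + α - x₂) k /
        (poch (1 - (m₁ : ℝ) + m₂ - τ) k * poch ((m₂ : ℝ) + τ + α + x₁) k *
          poch ((m₂ : ℝ) + τ + α - x₁) k * poch 1 k)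

lemma poch_zero (a : ℝ) : poch a 0 = 1 := by simp [poch]

/-- The reduction formula for `BC₂`-type interpolation Jack polynomials:
`P^ip_{(m₁,m₂)}(x₁,x₂;τ,α)
  = (α+x₁)_{m₂}(α-x₁)_{m₂}(α+x₂)_{m₂}(α-x₂)_{m₂} P^ip_{(m₁-m₂,0)}(x₁,x₂;τ,m₂+α)`. -/
theorem bc2_interpolation_jack_reduction (τ α x₁ x₂ : ℝ) (hτ : 0 < τ)
    (m₁ m₂ : ℕ) (h : m₂ ≤ m₁) :
    PBCipJack τ α x₁ x₂ m₁ m₂ =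
      poch (α + x₁) m₂ * poch (α - x₁) m₂ * poch (α + x₂) m₂ * poch (α - x₂) m₂ *
        PBCipJack τ ((m₂ : ℝ) + α) x₁ x₂ (m₁ - m₂) 0 := by
  have hc : ((m₁ - m₂ : ℕ) : ℝ) = (m₁ : ℝ) - m₂ := by push_cast [h]; ring
  have hsign : ((-1:ℝ)) ^ (m₁ + m₂) = (-1) ^ (m₁ - m₂ + 0) := by
    rw [Nat.add_zero]
    have : m₁ + m₂ = (m₁ - m₂) + 2 * m₂ := by omega
    rw [this, pow_add, pow_mul]
    norm_num
  unfold PBCipJack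
  rw [Nat.sub_zero, hsign]
  simp only [poch_zero, Nat.cast_zero, hc, div_eq_mul_inv, mul_inv]
  ring_nf
end
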